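/- Let W be strictly increasing right-continuous and V strictly increasing left-continuous on [0,1], with W(0)=V(0)=0. Define F₂(x,x) = ∫_{(0,x]} V(s) dW(s), and recursively p₀(x)=1, p_{n+1}(x) = ∫_{(0,x]} ∫_{[0,s)} p_n(ξ) dV(ξ) dW(s), so that p_n(x) = F_{2n}(x,x). Then for all n ≥ 1 and x ∈ [0,1], F_{2n}(x,x) ≤ (V(x) W(x))ⁿ / (n!)². -/

import Mathlib

set_option maxHeartbeats 1000000

open MeasureTheory Set Filter Function

lemma layercake_pow_bound (μ : Measure ℝ) [IsFiniteMeasure μ] {f : ℝ → ℝ}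
    (hf : Measurable f) (hf0 : ∀ a, 0 ≤ f a) {c : ℝ} (hc : 0 ≤ c) (m : ℕ)
    (hb : ∀ t : ℝ, 0 < t → μ {a | t < f a} ≤ ENNReal.ofReal (c - t)) :
    ∫ a, f a ^ (m + 1) ∂μ ≤ c ^ (m + 2) / ((m : ℝ) + 2) := by
  set g : ℝ → ℝ := fun t => ((m : ℝ) + 1) * t ^ m with hg
  have hgc : Continuous g := by fun_prop
  have hlc := lintegral_comp_eq_lintegral_meas_lt_mul μ (f := f)
    (Eventually.of_forall hf0) hf.aemeasurable
    (fun t _ => hgc.intervalIntegrable 0 t)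
    (((ae_restrict_iff' measurableSet_Ioi).2 (Eventually.of_forall fun t ht => by
      have : (0:ℝ) < t := ht
      positivity)))
  have hG : ∀ y : ℝ, (∫ t in (0:ℝ)..y, g t) = y ^ (m + 1) := by
    intro y
    rw [hg]
    rw [intervalIntegral.integral_const_mul, integral_pow]
    have : ((m:ℝ) + 1) ≠ 0 := by positivity
    field_simp
    simp
  simp_rw [hG] at hlc
  have heq : ∫ a, f a ^ (m + 1) ∂μ
      = (∫⁻ a, ENNReal.ofReal (f a ^ (m + 1)) ∂μ).toReal := by
    rw [integral_eq_lintegral_of_nonneg_ae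
      (Eventually.of_forall fun a => pow_nonneg (hf0 a) _)
      ((hf.pow_const _).aestronglyMeasurable)]
  rw [heq, hlc]
  apply ENNReal.toReal_le_of_le_ofReal (by positivity)
  have hIntOn : IntegrableOn (fun t => (c - t) * g t) (Ioc 0 c) volume := by
    apply Continuous.integrableOn_Ioc
    fun_prop
  calc ∫⁻ t in Ioi 0, μ {a | t < f a} * ENNReal.ofReal (g t)
      ≤ ∫⁻ t in Ioi 0, (Ioc 0 c).indicator
          (fun t => ENNReal.ofReal ((c - t) * g t)) t := by
        have hm : Measurable fun t => (Ioc 0 c).indicator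
            (fun t => ENNReal.ofReal ((c - t) * g t)) t := by
          apply Measurable.indicator _ measurableSet_Ioc
          exact ENNReal.measurable_ofReal.comp (by fun_prop)
        apply setLIntegral_mono hm
        intro t ht
        have ht0 : (0:ℝ) < t := ht
        have hgt : 0 ≤ g t := by positivity
        by_cases htc : t ≤ c
        · rw [indicator_of_mem (by exact ⟨ht0, htc⟩), ENNReal.ofReal_mul' hgt]
          exact mul_le_mul_left (hb t ht0) _
        · rw [indicator_of_notMem (fun hmem => htc hmem.2)]
          have : μ {a | t < f a} = 0 := by
            have := hb t ht0
            simpa [ENNReal.ofReal_eq_zero.2 (by linarith : c - t ≤ 0)] using this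
          simp [this]
    _ = ∫⁻ t in Ioc 0 c, ENNReal.ofReal ((c - t) * g t) := by
        rw [lintegral_indicator measurableSet_Ioc,
          Measure.restrict_restrict measurableSet_Ioc]
        congr 1
        rw [inter_eq_left.2 (Ioc_subset_Ioi_self)]
    _ = ENNReal.ofReal (∫ t in Ioc 0 c, (c - t) * g t) := by
        rw [ofReal_integral_eq_lintegral_ofReal hIntOn]
        exact (ae_restrict_iff' measurableSet_Ioc).2 (Eventually.of_forall fun t ht => by
          have h1 : 0 ≤ c - t := by linarith [ht.2]
          have h2 : (0:ℝ) < t := ht.1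
          positivity)
    _ ≤ ENNReal.ofReal (c ^ (m + 2) / ((m : ℝ) + 2)) := by
        apply ENNReal.ofReal_le_ofReal
        apply le_of_eq
        rw [← intervalIntegral.integral_of_le hc]
        have expand : ∀ t : ℝ, (c - t) * g t
            = (((m:ℝ) + 1) * c) * t ^ m - ((m:ℝ) + 1) * t ^ (m + 1) := by
          intro t; rw [hg]; ring
        simp_rw [expand]
        rw [intervalIntegral.integral_sub ((intervalIntegral.intervalIntegrable_pow m).const_mul _)
          ((intervalIntegral.intervalIntegrable_pow (m+1)).const_mul _),
          intervalIntegral.integral_const_mul, intervalIntegral.integral_const_mul,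
          integral_pow, integral_pow]
        have h1 : ((m:ℝ) + 1) ≠ 0 := by positivity
        have h2 : ((m:ℝ) + 2) ≠ 0 := by positivity
        push_cast
        field_simp
        ring

lemma lemW (W : StieltjesFunction ℝ) (hW0 : W 0 = 0) {x : ℝ} (hx : 0 ≤ x) (n : ℕ) :
    ∫ s in Ioc 0 x, (max (leftLim (W : ℝ → ℝ) s) 0) ^ n ∂W.measure
      ≤ W x ^ (n + 1) / ((n : ℝ) + 1) := by
  have hWx : 0 ≤ W x := by rw [← hW0]; exact W.mono hx
  have hfin : Fact (W.measure (Ioc 0 x) < ⊤) := ⟨by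
    rw [W.measure_Ioc]; exact ENNReal.ofReal_lt_top⟩
  haveI := hfin
  haveI : IsFiniteMeasure (W.measure.restrict (Ioc 0 x)) :=
    MeasureTheory.Restrict.isFiniteMeasure _
  set f : ℝ → ℝ := fun s => max (leftLim (W : ℝ → ℝ) s) 0 with hfdef
  have hfm : Measurable f := (W.mono.leftLim.max monotone_const).measurable
  have hf0 : ∀ a, 0 ≤ f a := fun a => le_max_right _ _
  match n with
  | 0 =>
    simp only [pow_zero]
    rw [setIntegral_const]
    rw [measureReal_def, W.measure_Ioc, hW0, sub_zero, ENNReal.toReal_ofReal hWx]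
    simp
  | Nat.succ m =>
    have hb : ∀ t : ℝ, 0 < t →
        (W.measure.restrict (Ioc 0 x)) {a | t < f a} ≤ ENNReal.ofReal (W x - t) := by
      intro t ht
      rw [Measure.restrict_apply' measurableSet_Ioc]
      have hmem : ∀ a, t < f a ↔ t < leftLim (W : ℝ → ℝ) a := by
        intro a
        simp only [hfdef, lt_max_iff]
        exact or_iff_left (by linarith)
      -- each element of the set gives some u < a with t < W u
      have hex : ∀ a, t < f a → ∃ u, u < a ∧ t < W u := by
        intro a hta
        rw [hmem] at hta
        have hev : ∀ᶠ u in nhdsWithin a (Iio a), t < W u :=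
          (W.mono.tendsto_leftLim a).eventually (eventually_gt_nhds hta)
        obtain ⟨u, hu1, hu2⟩ := (eventually_mem_nhdsWithin.and hev).exists
        exact ⟨u, hu1, hu2⟩
      set T : Set ℝ := {u | t < W u} with hT
      rcases eq_empty_or_nonempty T with hTe | hTne
      · have : {a | t < f a} ∩ Ioc 0 x = ∅ := by
          apply eq_empty_of_forall_notMem
          rintro a ⟨ha, -⟩
          obtain ⟨u, -, hu2⟩ := hex a ha
          exact (eq_empty_iff_forall_notMem.1 hTe) u hu2
        simp [this]
      · have hbdd : BddBelow T := ⟨0, fun u hu => by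
          by_contra hu0
          push_neg at hu0
          have : W u ≤ 0 := hW0 ▸ W.mono hu0.le
          exact absurd hu (by simp only [hT, mem_setOf_eq]; linarith)⟩
        set b := sInf T with hbdef
        have hWb : t ≤ W b := by
          have hev : ∀ᶠ u in nhdsWithin b (Ioi b), t ≤ W u := by
            filter_upwards [eventually_mem_nhdsWithin] with u hu
            obtain ⟨v, hv1, hv2⟩ := exists_lt_of_csInf_lt hTne hu
            exact le_trans hv1.le (W.mono hv2.le)
          exact ge_of_tendsto ((W.right_continuous b).mono_left
            (nhdsWithin_mono _ Ioi_subset_Ici_self)) hev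
        have hsub : {a | t < f a} ∩ Ioc 0 x ⊆ Ioc b x := by
          rintro a ⟨ha, ha2⟩
          obtain ⟨u, hu1, hu2⟩ := hex a ha
          exact ⟨lt_of_le_of_lt (csInf_le hbdd hu2) hu1, ha2.2⟩
        calc W.measure ({a | t < f a} ∩ Ioc 0 x) ≤ W.measure (Ioc b x) :=
              measure_mono hsub
          _ = ENNReal.ofReal (W x - W b) := W.measure_Ioc b x
          _ ≤ ENNReal.ofReal (W x - t) := ENNReal.ofReal_le_ofReal (by linarith)
    have := layercake_pow_bound (W.measure.restrict (Ioc 0 x)) hfm hf0 hWx m hb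
    have hcast : ((m : ℝ) + 2) = ((Nat.succ m : ℕ) : ℝ) + 1 := by push_cast; ring
    rw [hcast] at this
    exact this

lemma lemV (V : ℝ → ℝ) (μV : Measure ℝ) [IsFiniteMeasure μV]
    (hVmono : MonotoneOn V (Icc 0 1)) (hV0 : V 0 = 0)
    (hμV : ∀ a b : ℝ, 0 ≤ a → a ≤ b → b ≤ 1 →
      μV (Ico a b) = ENNReal.ofReal (V b - V a))
    {s : ℝ} (hs : 0 < s) (hs1 : s ≤ 1) (n : ℕ) :
    ∫ ξ in Ico 0 s, (V (max 0 (min ξ 1))) ^ n ∂μV ≤ V s ^ (n + 1) / ((n : ℝ) + 1) := by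
  have hclampmem : ∀ ξ : ℝ, max 0 (min ξ 1) ∈ Icc (0:ℝ) 1 := fun ξ =>
    ⟨le_max_left _ _, max_le (by norm_num) (min_le_right _ _)⟩
  have hsmem : s ∈ Icc (0:ℝ) 1 := ⟨hs.le, hs1⟩
  have hVs : 0 ≤ V s := by
    rw [← hV0]; exact hVmono ⟨le_refl 0, zero_le_one⟩ hsmem hs.le
  set f : ℝ → ℝ := fun ξ => V (max 0 (min ξ 1)) with hfdef
  have hfmono : Monotone f := by
    intro a b hab
    exact hVmono (hclampmem a) (hclampmem b)
      (max_le_max (le_refl 0) (min_le_min hab (le_refl 1)))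
  have hfm : Measurable f := hfmono.measurable
  have hf0 : ∀ a, 0 ≤ f a := fun a => by
    rw [← hV0]; exact hVmono ⟨le_refl 0, zero_le_one⟩ (hclampmem a) (le_max_left _ _)
  have hfeq : ∀ ξ ∈ Ico (0:ℝ) s, f ξ = V ξ := by
    intro ξ hξ
    have h1 : min ξ 1 = ξ := min_eq_left (le_trans hξ.2.le hs1)
    have h2 : max 0 ξ = ξ := max_eq_right hξ.1
    simp [hfdef, h1, h2]
  match n with
  | 0 =>
    simp only [pow_zero]
    rw [setIntegral_const, measureReal_def, hμV 0 s (le_refl 0) hs.le hs1, hV0, sub_zero,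
      ENNReal.toReal_ofReal hVs]
    simp
  | Nat.succ m =>
    have hb : ∀ t : ℝ, 0 < t →
        (μV.restrict (Ico 0 s)) {a | t < f a} ≤ ENNReal.ofReal (V s - t) := by
      intro t ht
      rw [Measure.restrict_apply' measurableSet_Ico]
      set A : Set ℝ := {a | t < f a} ∩ Ico 0 s with hA
      have hAV : ∀ a ∈ A, t < V a := fun a ha => (hfeq a ha.2) ▸ ha.1
      rcases eq_empty_or_nonempty A with hAe | hAne
      · rw [hAe]; simp
      · have hbdd : BddBelow A := ⟨0, fun a ha => ha.2.1⟩
        set b := sInf A with hbdef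
        have hb0 : 0 ≤ b := le_csInf hAne fun a ha => ha.2.1
        have hbs : b < s := by
          obtain ⟨a, ha⟩ := hAne
          exact lt_of_le_of_lt (csInf_le hbdd ha) ha.2.2
        by_cases hbA : b ∈ A
        · have hsub : A ⊆ Ico b s := fun a ha => ⟨csInf_le hbdd ha, ha.2.2⟩
          calc μV A ≤ μV (Ico b s) := measure_mono hsub
            _ = ENNReal.ofReal (V s - V b) := hμV b s hb0 hbs.le hs1
            _ ≤ ENNReal.ofReal (V s - t) :=
                ENNReal.ofReal_le_ofReal (by linarith [hAV b hbA])
        · have hsub : A ⊆ Ioo b s := by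
            intro a ha
            rcases lt_or_eq_of_le (csInf_le hbdd ha) with h | h
            · exact ⟨h, ha.2.2⟩
            · exact absurd (show b ∈ A by show sInf A ∈ A; rw [h]; exact ha) hbA
          set q : ℕ → ℝ := fun k => b + (s - b) / (k + 1) with hq
          have hq1 : ∀ k, b < q k := fun k => by
            have hsb : (0:ℝ) < s - b := by linarith
            have : (0:ℝ) < (s - b) / ((k:ℝ) + 1) :=
              div_pos hsb (by positivity)
            simp only [hq]; linarith
          have hq2 : ∀ k, q k ≤ s := fun k => by
            have hk0 : (0:ℝ) ≤ (k:ℝ) := Nat.cast_nonneg k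
            have : (s - b) / ((k:ℝ) + 1) ≤ (s - b) :=
              div_le_self (by linarith) (by linarith)
            simp only [hq]; linarith
          have hqanti : ∀ k l : ℕ, k ≤ l → q l ≤ q k := by
            intro k l hkl
            simp only [hq]
            have h1 : (0:ℝ) < (k:ℝ) + 1 := by positivity
            have h2 : ((k:ℝ) + 1) ≤ ((l:ℝ) + 1) := by
              have : (k:ℝ) ≤ (l:ℝ) := by exact_mod_cast hkl
              linarith
            have h3 : (s - b) / ((l:ℝ) + 1) ≤ (s - b) / ((k:ℝ) + 1) := by
              apply div_le_div_of_nonneg_left (by linarith : (0:ℝ) ≤ s - b) h1 h2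
            linarith
          have hunion : Ioo b s = ⋃ k : ℕ, Ico (q k) s := by
            ext ξ
            simp only [mem_Ioo, mem_iUnion, mem_Ico]
            constructor
            · rintro ⟨h1, h2⟩
              obtain ⟨k, hk⟩ := exists_nat_ge ((s - b) / (ξ - b))
              refine ⟨k, ?_, h2⟩
              have hξb : 0 < ξ - b := by linarith
              have hsb : 0 < s - b := by linarith
              have h3 : (s - b) / (ξ - b) ≤ (k:ℝ) + 1 := by linarith
              have h4 : s - b ≤ ((k:ℝ) + 1) * (ξ - b) := (div_le_iff₀ hξb).1 h3
              have h5 : (s - b) / ((k:ℝ) + 1) ≤ ξ - b := by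
                rw [div_le_iff₀ (by positivity : (0:ℝ) < (k:ℝ) + 1)]
                nlinarith
              simp only [hq]; linarith
            · rintro ⟨k, h1, h2⟩
              exact ⟨lt_of_lt_of_le (hq1 k) h1, h2⟩
          have hdir : Directed (· ⊆ ·) (fun k : ℕ => Ico (q k) s) := by
            apply Monotone.directed_le
            intro k l hkl
            exact Ico_subset_Ico_left (hqanti k l hkl)
          have hqbound : ∀ k, μV (Ico (q k) s) ≤ ENNReal.ofReal (V s - t) := by
            intro k
            rw [hμV (q k) s (le_trans hb0 (hq1 k).le) (hq2 k) hs1]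
            apply ENNReal.ofReal_le_ofReal
            obtain ⟨a, haA, hak⟩ := exists_lt_of_csInf_lt hAne (hq1 k)
            have : V a ≤ V (q k) := hVmono ⟨haA.2.1, le_trans haA.2.2.le hs1⟩
              ⟨le_trans hb0 (hq1 k).le, le_trans (hq2 k) hs1⟩ hak.le
            linarith [hAV a haA]
          calc μV A ≤ μV (Ioo b s) := measure_mono hsub
            _ = ⨆ k, μV (Ico (q k) s) := by rw [hunion]; exact hdir.measure_iUnion
            _ ≤ ENNReal.ofReal (V s - t) := iSup_le hqbound
    have := layercake_pow_bound (μV.restrict (Ico 0 s)) hfm hf0 hVs m hb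
    have hcast : ((m : ℝ) + 2) = ((Nat.succ m : ℕ) : ℝ) + 1 := by push_cast; ring
    rw [hcast] at this
    exact this

/-- With `W` strictly increasing càdlàg, `V` strictly increasing càglàd on `[0,1]`,
`W(0)=V(0)=0`, and the iterated integrals `p₀ = 1`,
`p_{n+1}(x) = ∫_{(0,x]} ∫_{[0,s)} p_n(ξ) dV(ξ) dW(s)` (so `p_n(x) = F_{2n}(x,x)`), we have
`F_{2n}(x,x) ≤ (V(x)W(x))ⁿ/(n!)²` for all `n ≥ 1` and `x ∈ [0,1]`. -/
theorem stmt3 (W : StieltjesFunction ℝ) (V : ℝ → ℝ) (μV : Measure ℝ) [IsFiniteMeasure μV]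
    (hW : StrictMonoOn W (Set.Icc 0 1)) (hW0 : W 0 = 0)
    (hV : StrictMonoOn V (Set.Icc 0 1)) (hV0 : V 0 = 0)
    (hVleft : ∀ x ∈ Set.Ioc (0:ℝ) 1, ContinuousWithinAt V (Set.Iic x) x)
    (hμV : ∀ a b : ℝ, 0 ≤ a → a ≤ b → b ≤ 1 →
      μV (Set.Ico a b) = ENNReal.ofReal (V b - V a))
    (p : ℕ → ℝ → ℝ)
    (hp0 : ∀ x, p 0 x = 1)
    (hp : ∀ (n : ℕ) (x : ℝ), p (n + 1) x =
      ∫ s in Set.Ioc (0:ℝ) x, (∫ ξ in Set.Ico (0:ℝ) s, p n ξ ∂μV) ∂W.measure) :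
    ∀ n : ℕ, 1 ≤ n → ∀ x ∈ Set.Icc (0:ℝ) 1,
      p n x ≤ (V x * W x) ^ n / ((n.factorial : ℝ)) ^ 2 := by
  have hWmono : Monotone (W : ℝ → ℝ) := W.mono
  have hVmonoOn : MonotoneOn V (Icc 0 1) := hV.monotoneOn
  have hclampmem : ∀ ξ : ℝ, max 0 (min ξ 1) ∈ Icc (0:ℝ) 1 := fun ξ =>
    ⟨le_max_left _ _, max_le (by norm_num) (min_le_right _ _)⟩
  set Vt : ℝ → ℝ := fun ξ => V (max 0 (min ξ 1)) with hVtdef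
  have hVtmono : Monotone Vt := fun a b hab =>
    hVmonoOn (hclampmem a) (hclampmem b)
      (max_le_max (le_refl 0) (min_le_min hab (le_refl 1)))
  have hVtnn : ∀ ξ, 0 ≤ Vt ξ := fun ξ => by
    rw [← hV0]; exact hVmonoOn ⟨le_refl 0, zero_le_one⟩ (hclampmem ξ) (le_max_left _ _)
  have hVtle : ∀ ξ, Vt ξ ≤ V 1 := fun ξ =>
    hVmonoOn (hclampmem ξ) ⟨zero_le_one, le_refl 1⟩ (hclampmem ξ).2
  have hVteq : ∀ ξ ∈ Icc (0:ℝ) 1, Vt ξ = V ξ := by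
    intro ξ hξ
    simp only [hVtdef]
    rw [min_eq_left hξ.2, max_eq_right hξ.1]
  have hpnn : ∀ n x, 0 ≤ p n x := by
    intro n
    induction n with
    | zero => intro x; rw [hp0]; norm_num
    | succ n ihn =>
      intro x
      rw [hp n x]
      exact integral_nonneg fun s => integral_nonneg fun ξ => ihn ξ
  have main : ∀ n : ℕ, ∀ x ∈ Icc (0:ℝ) 1,
      p n x ≤ (V x * W x) ^ n / ((n.factorial : ℝ)) ^ 2 := by
    intro n
    induction n with
    | zero => intro x _; rw [hp0]; simp
    | succ n ih =>
      rintro x ⟨hx0, hx1⟩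
      have hWx : 0 ≤ W x := by rw [← hW0]; exact hWmono hx0
      have hVx : 0 ≤ V x := by
        rw [← hV0]; exact hVmonoOn ⟨le_refl 0, zero_le_one⟩ ⟨hx0, hx1⟩ hx0
      have hfac : (0:ℝ) < (n.factorial : ℝ) := by exact_mod_cast Nat.factorial_pos n
      set c2 : ℝ := ((n.factorial : ℝ)) ^ 2 with hc2
      have hc2pos : 0 < c2 := by positivity
      set c1 : ℝ := V x ^ (n + 1) / (((n:ℝ) + 1) * c2) with hc1
      have hc1nn : 0 ≤ c1 := by positivity
      set mW : ℝ → ℝ := fun s => max (leftLim (W : ℝ → ℝ) s) 0 with hmWdef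
      have hmWnn : ∀ s, 0 ≤ mW s := fun s => le_max_right _ _
      have hmWm : Measurable mW := (hWmono.leftLim.max monotone_const).measurable
      have hfin : Fact (W.measure (Ioc 0 x) < ⊤) := ⟨by
        rw [W.measure_Ioc]; exact ENNReal.ofReal_lt_top⟩
      haveI := hfin
      haveI : IsFiniteMeasure (W.measure.restrict (Ioc 0 x)) :=
        MeasureTheory.Restrict.isFiniteMeasure _
      have hGint : Integrable (fun s => c1 * mW s ^ n) (W.measure.restrict (Ioc 0 x)) := by
        refine Integrable.const_mul ?_ c1
        refine ⟨(hmWm.pow_const n).aestronglyMeasurable, ?_⟩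
        apply HasFiniteIntegral.of_bounded (C := (max (W x) 0) ^ n)
        rw [ae_restrict_iff' measurableSet_Ioc]
        apply Eventually.of_forall
        intro s hs
        rw [Real.norm_eq_abs, abs_of_nonneg (pow_nonneg (hmWnn s) n)]
        apply pow_le_pow_left₀ (hmWnn s)
        exact max_le_max (le_trans (hWmono.leftLim_le le_rfl) (hWmono hs.2)) (le_refl 0)
      have hInner : ∀ s ∈ Ioc (0:ℝ) x, (∫ ξ in Ico (0:ℝ) s, p n ξ ∂μV) ≤ c1 * mW s ^ n := by
        intro s hs
        have hs1 : s ≤ 1 := le_trans hs.2 hx1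
        have hsmem : s ∈ Icc (0:ℝ) 1 := ⟨hs.1.le, hs1⟩
        have hVs : 0 ≤ V s := by
          rw [← hV0]; exact hVmonoOn ⟨le_refl 0, zero_le_one⟩ hsmem hs.1.le
        have hVtint : Integrable (fun ξ => (mW s ^ n / c2) * Vt ξ ^ n)
            (μV.restrict (Ico 0 s)) := by
          refine Integrable.const_mul ?_ _
          refine ⟨((hVtmono.measurable).pow_const n).aestronglyMeasurable, ?_⟩
          apply HasFiniteIntegral.of_bounded (C := V 1 ^ n)
          apply Eventually.of_forall
          intro ξ
          rw [Real.norm_eq_abs, abs_of_nonneg (pow_nonneg (hVtnn ξ) n)]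
          exact pow_le_pow_left₀ (hVtnn ξ) (hVtle ξ) n
        have step1 : (∫ ξ in Ico (0:ℝ) s, p n ξ ∂μV)
            ≤ ∫ ξ in Ico (0:ℝ) s, (mW s ^ n / c2) * Vt ξ ^ n ∂μV := by
          apply integral_mono_of_nonneg (Eventually.of_forall fun ξ => hpnn n ξ) hVtint
          refine (ae_restrict_iff' measurableSet_Ico).2 (Eventually.of_forall ?_)
          intro ξ hξ
          have hξ1 : ξ ∈ Icc (0:ℝ) 1 := ⟨hξ.1, le_trans hξ.2.le hs1⟩
          have hWξ : 0 ≤ W ξ := by rw [← hW0]; exact hWmono hξ.1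
          have hVξ : 0 ≤ V ξ := by
            rw [← hV0]; exact hVmonoOn ⟨le_refl 0, zero_le_one⟩ hξ1 hξ.1
          have hWle : W ξ ≤ mW s := le_trans (hWmono.le_leftLim hξ.2) (le_max_left _ _)
          have hVeq : Vt ξ = V ξ := hVteq ξ hξ1
          calc p n ξ ≤ (V ξ * W ξ) ^ n / c2 := ih ξ hξ1
            _ = (V ξ ^ n * W ξ ^ n) / c2 := by rw [mul_pow]
            _ ≤ (Vt ξ ^ n * mW s ^ n) / c2 := by
                rw [hVeq]
                gcongr
            _ = (mW s ^ n / c2) * Vt ξ ^ n := by ring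
        have step2 := lemV V μV hVmonoOn hV0 hμV hs.1 hs1 n
        calc (∫ ξ in Ico (0:ℝ) s, p n ξ ∂μV)
            ≤ ∫ ξ in Ico (0:ℝ) s, (mW s ^ n / c2) * Vt ξ ^ n ∂μV := step1
          _ = (mW s ^ n / c2) * ∫ ξ in Ico (0:ℝ) s, Vt ξ ^ n ∂μV := by
              rw [integral_const_mul]
          _ ≤ (mW s ^ n / c2) * (V s ^ (n + 1) / ((n:ℝ) + 1)) := by
              apply mul_le_mul_of_nonneg_left step2 (by positivity)
          _ ≤ (mW s ^ n / c2) * (V x ^ (n + 1) / ((n:ℝ) + 1)) := by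
              have hVsx : V s ≤ V x := hVmonoOn hsmem ⟨hx0, hx1⟩ hs.2
              gcongr
          _ = c1 * mW s ^ n := by
              rw [hc1, hc2]
              have h1 : ((n:ℝ) + 1) ≠ 0 := by positivity
              have h2 : ((n.factorial : ℝ)) ≠ 0 := ne_of_gt hfac
              field_simp
      rw [hp n x]
      have step3 : ∫ s in Ioc (0:ℝ) x, (∫ ξ in Ico (0:ℝ) s, p n ξ ∂μV) ∂W.measure
          ≤ ∫ s in Ioc (0:ℝ) x, c1 * mW s ^ n ∂W.measure := by
        apply integral_mono_of_nonneg
          (Eventually.of_forall fun s => integral_nonneg fun ξ => hpnn n ξ) hGint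
        exact (ae_restrict_iff' measurableSet_Ioc).2 (Eventually.of_forall hInner)
      have step4 : ∫ s in Ioc (0:ℝ) x, c1 * mW s ^ n ∂W.measure
          ≤ c1 * (W x ^ (n + 1) / ((n:ℝ) + 1)) := by
        rw [integral_const_mul]
        exact mul_le_mul_of_nonneg_left (lemW W hW0 hx0 n) hc1nn
      have final : c1 * (W x ^ (n + 1) / ((n:ℝ) + 1))
          = (V x * W x) ^ (n + 1) / (((n + 1).factorial : ℝ)) ^ 2 := by
        rw [hc1, hc2, div_mul_div_comm, mul_pow (V x) (W x), Nat.factorial_succ]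
        congr 1
        push_cast
        ring
      calc (∫ s in Ioc (0:ℝ) x, (∫ ξ in Ico (0:ℝ) s, p n ξ ∂μV) ∂W.measure)
          ≤ c1 * (W x ^ (n + 1) / ((n:ℝ) + 1)) := step3.trans step4
        _ = (V x * W x) ^ (n + 1) / (((n + 1).factorial : ℝ)) ^ 2 := final
  exact fun n _ x hx => main n x hx
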